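/- Let C be a CSS code with K ≥ 1 and let C̃ be its thickened code with parameter l ≥ 2 and any choice function κ. Then K̃ = K ≥ 1 and the X-distance satisfies exactly d̃_X = l·d_X. -/

import Mathlib

open Matrix Finset

open Matrix

/-- The weight of a vector over `F₂`: the number of nonzero entries. -/
def wt {α : Type*} [Fintype α] (v : α → ZMod 2) : ℕ :=
  (Finset.univ.filter fun j => v j ≠ 0).card

/-- Maximum weight of a row of a matrix over `F₂`. -/
def maxRowW {m α : Type*} [Fintype m] [Fintype α] (M : Matrix m α (ZMod 2)) : ℕ :=
  Finset.univ.sup fun i => wt (M i)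

/-- Maximum weight of a column of a matrix over `F₂`. -/
def maxColW {m α : Type*} [Fintype m] [Fintype α] (M : Matrix m α (ZMod 2)) : ℕ :=
  Finset.univ.sup fun j => wt fun i => M i j

/-- Total number of nonzero entries of a matrix over `F₂`. -/
def totW {m α : Type*} [Fintype m] [Fintype α] (M : Matrix m α (ZMod 2)) : ℕ :=
  ∑ i, wt (M i)

variable {N nX nZ : ℕ}

/-- Qubits of the thickened code: qubits `(q,k)` for `q` a qubit of `C` and `k ∈ {1,…,l}`
(0-indexed below), together with qubits `[s,k]` for `s` a row of `H_X` and
`k ∈ {1,…,l−1}`. -/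
abbrev TQubit (N nX l : ℕ) : Type := (Fin N × Fin l) ⊕ (Fin nX × Fin (l - 1))

/-- Row index type of the Z-type generator matrix of the thickened code: one generator for
each row of `H_Z` (type (i)), and one for each pair of a qubit `q` of `C` and
`k ∈ {1,…,l−1}` (type (ii)). -/
abbrev TZIdx (N nZ l : ℕ) : Type := Fin nZ ⊕ (Fin N × Fin (l - 1))

/-- X-type generator matrix of the thickened code: for each row `s` of `HX` with support
`{q₁,…,q_w}` and each `k ∈ {1,…,l}` (0-indexed here), one generator with support
`{(q₁,k),…,(q_w,k)} ∪ {[s,k−1],[s,k]}` (with `[s,0]`, `[s,l]` omitted at the ends). -/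
def thickHX (HX : Matrix (Fin nX) (Fin N) (ZMod 2)) (l : ℕ) :
    Matrix (Fin nX × Fin l) (TQubit N nX l) (ZMod 2) := fun s j =>
  match s, j with
  | (s, k), Sum.inl (p, k') => if k' = k then HX s p else 0
  | (s, k), Sum.inr (s', k') =>
      if s' = s ∧ ((k'.val = k.val) ∨ (k'.val + 1 = k.val)) then 1 else 0

/-- Z-type generator matrix of the thickened code with choice function `κ`:
(i) for each row `r` of `HZ` with support `{q₁,…,q_w}`, one generator with support
`{(q₁,κ(r)),…,(q_w,κ(r))}`; (ii) for each qubit `q` of `C` and each `k ∈ {1,…,l−1}`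
(0-indexed here), one generator with support
`{(q,k),(q,k+1)} ∪ {[s,k] : row s of HX acts on q}`. -/
def thickHZ (HX : Matrix (Fin nX) (Fin N) (ZMod 2)) (HZ : Matrix (Fin nZ) (Fin N) (ZMod 2))
    (l : ℕ) (κ : Fin nZ → Fin l) :
    Matrix (TZIdx N nZ l) (TQubit N nX l) (ZMod 2) := fun r j =>
  match r, j with
  | Sum.inl R, Sum.inl (p, k) => if k = κ R then HZ R p else 0
  | Sum.inl _, Sum.inr _ => 0
  | Sum.inr (p, k), Sum.inl (p', k') =>
      if p' = p ∧ ((k'.val = k.val) ∨ (k'.val = k.val + 1)) then 1 else 0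
  | Sum.inr (p, k), Sum.inr (s, k') => if k'.val = k.val then HX s p else 0

/-- `distX HX HZ` is the X-distance of the CSS code with generator matrices `HX`, `HZ`:
the minimum weight of a vector in `ker(HZ)` not lying in the row space of `HX`. -/
noncomputable def distX {mX mZ α : Type*} [Fintype mX] [Fintype mZ] [Fintype α]
    (HX : Matrix mX α (ZMod 2)) (HZ : Matrix mZ α (ZMod 2)) : ℕ :=
  sInf {k | ∃ v : α → ZMod 2, HZ.mulVec v = 0 ∧
    v ∉ Submodule.span (ZMod 2) (Set.range HX) ∧ wt v = k}

/-- `distZ HX HZ` is the Z-distance of the CSS code with generator matrices `HX`, `HZ`: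
the minimum weight of a vector in `ker(HX)` not lying in the row space of `HZ`. -/
noncomputable def distZ {mX mZ α : Type*} [Fintype mX] [Fintype mZ] [Fintype α]
    (HX : Matrix mX α (ZMod 2)) (HZ : Matrix mZ α (ZMod 2)) : ℕ :=
  sInf {k | ∃ v : α → ZMod 2, HX.mulVec v = 0 ∧
    v ∉ Submodule.span (ZMod 2) (Set.range HZ) ∧ wt v = k}

abbrev F2 := ZMod 2

lemma F2.add_self (x : F2) : x + x = 0 := by
  have h : (2 : F2) = 0 := by decide
  calc x + x = 2 * x := by ring
  _ = 0 := by rw [h, zero_mul]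

lemma F2.eq_of_add_eq_zero {x y : F2} (h : x + y = 0) : x = y := by
  revert h; revert x y; decide

/-- rank + left-nullity = number of rows -/
lemma rank_add_leftker {m n : Type*} [Fintype m] [Fintype n] [DecidableEq m]
    (A : Matrix m n F2) :
    A.rank + Module.finrank F2 (LinearMap.ker A.vecMulLinear) = Fintype.card m := by
  have h1 : A.rank = Aᵀ.rank := (Matrix.rank_transpose A).symm
  have h2 := LinearMap.finrank_range_add_finrank_ker (Aᵀ.mulVecLin)
  rw [Matrix.mulVecLin_transpose] at h2
  rw [h1, Matrix.rank, Matrix.mulVecLin_transpose]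
  simpa using h2

lemma mem_span_rows_iff {m n : Type*} [Fintype m] [Fintype n] (A : Matrix m n F2)
    (v : n → F2) :
    v ∈ Submodule.span F2 (Set.range A) ↔ ∃ c : m → F2, c ᵥ* A = v := by
  rw [show Set.range A = Set.range A.row from rfl, ← range_vecMulLinear]
  exact Iff.rfl

section
variable {l : ℕ}

/-- embedding `Fin (l-1) → Fin l`, value `k'`. -/
def e0 (k' : Fin (l - 1)) : Fin l := ⟨k'.val, by have := k'.isLt; omega⟩
/-- embedding `Fin (l-1) → Fin l`, value `k'+1`. -/
def e1 (k' : Fin (l - 1)) : Fin l := ⟨k'.val + 1, by have := k'.isLt; omega⟩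

lemma e0_ne_e1 (k' : Fin (l - 1)) : e0 k' ≠ e1 k' := by
  simp [e0, e1, Fin.ext_iff]

end

lemma ite_or_split {P Q : Prop} [Decidable P] [Decidable Q] (h : ¬(P ∧ Q)) (x : F2) :
    (if P ∨ Q then x else 0) = (if P then x else 0) + (if Q then x else 0) := by
  by_cases hP : P <;> by_cases hQ : Q <;> simp_all

lemma sum_ite_or {α : Type*} [Fintype α] [DecidableEq α] (a b : α) (hab : a ≠ b)
    (f : α → F2) :
    (∑ k, if k = a ∨ k = b then f k else 0) = f a + f b := by
  have : ∀ k, (if k = a ∨ k = b then f k else 0)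
      = (if k = a then f k else 0) + (if k = b then f k else 0) := by
    intro k
    apply ite_or_split
    rintro ⟨rfl, rfl⟩; exact hab rfl
  rw [Finset.sum_congr rfl (fun k _ => this k), Finset.sum_add_distrib]
  simp

section VecMulThick
variable {N nX nZ : ℕ} (HX : Matrix (Fin nX) (Fin N) F2) (HZ : Matrix (Fin nZ) (Fin N) F2)
  {l : ℕ} (hl : 2 ≤ l)

lemma vecMul_thickHX_inl (d : Fin nX × Fin l → F2) (q : Fin N) (k : Fin l) :
    (d ᵥ* thickHX HX l) (Sum.inl (q, k)) = ((fun s => d (s, k)) ᵥ* HX) q := by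
  simp only [Matrix.vecMul, dotProduct, thickHX, Fintype.sum_prod_type]
  rw [Finset.sum_comm]
  simp [mul_ite]

lemma vecMul_thickHX_inr (d : Fin nX × Fin l → F2) (s : Fin nX) (k' : Fin (l - 1)) :
    (d ᵥ* thickHX HX l) (Sum.inr (s, k')) = d (s, e0 k') + d (s, e1 k') := by
  simp only [Matrix.vecMul, dotProduct, thickHX, Fintype.sum_prod_type]
  have this : ∀ s2 : Fin nX, ∀ k : Fin l,
      (d (s2, k) * if s = s2 ∧ (k'.val = k.val ∨ k'.val + 1 = k.val) then 1 else 0)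
      = if s = s2 then (if k = e0 k' ∨ k = e1 k' then d (s2, k) else 0) else 0 := by
    intro s2 k
    have h3 : (k = e0 k' ∨ k = e1 k') ↔ (k'.val = k.val ∨ k'.val + 1 = k.val) := by
      simp only [e0, e1, Fin.ext_iff]; omega
    by_cases h1 : s = s2
    · rw [if_pos h1]
      by_cases h2 : k'.val = k.val ∨ k'.val + 1 = k.val
      · rw [if_pos ⟨h1, h2⟩, if_pos (h3.mpr h2), mul_one]
      · rw [if_neg (fun hc => h2 hc.2), if_neg (fun hc => h2 (h3.mp hc)), mul_zero]
    · rw [if_neg (fun hc => h1 hc.1), if_neg h1, mul_zero]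
  rw [Finset.sum_congr rfl (fun s2 _ => Finset.sum_congr rfl (fun k _ => this s2 k))]
  have step : ∀ s2, (∑ k, if s = s2 then (if k = e0 k' ∨ k = e1 k' then d (s2, k) else 0) else 0)
      = if s = s2 then (∑ k, if k = e0 k' ∨ k = e1 k' then d (s2, k) else 0) else 0 := by
    intro s2; split <;> simp
  rw [Finset.sum_congr rfl (fun s2 _ => step s2), Finset.sum_ite_eq]
  rw [if_pos (Finset.mem_univ s)]
  exact sum_ite_or _ _ (e0_ne_e1 k') _

end VecMulThick

section B
variable {N nX nZ : ℕ} (HX : Matrix (Fin nX) (Fin N) F2) (HZ : Matrix (Fin nZ) (Fin N) F2)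
  {l : ℕ} (κ : Fin nZ → Fin l)

lemma mulVec_thickHZ_inl (x : TQubit N nX l → F2) (R : Fin nZ) :
    (thickHZ HX HZ l κ *ᵥ x) (Sum.inl R)
      = (HZ *ᵥ (fun q => x (Sum.inl (q, κ R)))) R := by
  simp only [Matrix.mulVec, dotProduct, thickHZ, Fintype.sum_sum_type, Fintype.sum_prod_type]
  simp [ite_mul, Finset.sum_ite_eq']

lemma mulVec_thickHZ_inr (x : TQubit N nX l → F2) (q : Fin N) (k' : Fin (l - 1)) :
    (thickHZ HX HZ l κ *ᵥ x) (Sum.inr (q, k'))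
      = x (Sum.inl (q, e0 k')) + x (Sum.inl (q, e1 k'))
        + ((fun s => x (Sum.inr (s, k'))) ᵥ* HX) q := by
  simp only [Matrix.mulVec, Matrix.vecMul, dotProduct, thickHZ, Fintype.sum_sum_type,
    Fintype.sum_prod_type]
  have h1 : ∀ p : Fin N, ∀ k : Fin l,
      ((if p = q ∧ (k.val = k'.val ∨ k.val = k'.val + 1) then (1:F2) else 0) * x (Sum.inl (p, k)))
      = if p = q then (if k = e0 k' ∨ k = e1 k' then x (Sum.inl (p, k)) else 0) else 0 := by
    intro p k
    have h3 : (k = e0 k' ∨ k = e1 k') ↔ (k.val = k'.val ∨ k.val = k'.val + 1) := by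
      simp only [e0, e1, Fin.ext_iff]; try omega
    by_cases hp : p = q <;> by_cases h2 : k.val = k'.val ∨ k.val = k'.val + 1 <;>
      simp [hp, h2, h3]
  rw [Finset.sum_congr rfl (fun p _ => Finset.sum_congr rfl (fun k _ => h1 p k))]
  have step : ∀ p, (∑ k, if p = q then (if k = e0 k' ∨ k = e1 k' then x (Sum.inl (p, k)) else 0) else 0)
      = if p = q then (∑ k, if k = e0 k' ∨ k = e1 k' then x (Sum.inl (p, k)) else 0) else 0 := by
    intro p; split <;> simp
  rw [Finset.sum_congr rfl (fun p _ => step p), Finset.sum_ite_eq', if_pos (Finset.mem_univ q),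
    sum_ite_or _ _ (e0_ne_e1 k')]
  congr 1
  rw [Finset.sum_comm]
  have h2 : ∀ k2 : Fin (l-1), ∀ s : Fin nX,
      ((if k2.val = k'.val then HX s q else 0) * x (Sum.inr (s, k2)))
      = if k2 = k' then x (Sum.inr (s, k2)) * HX s q else 0 := by
    intro k2 s
    by_cases hk : k2 = k'
    · simp [hk, mul_comm]
    · rw [if_neg (fun hc => hk (Fin.ext hc)), if_neg hk, zero_mul]
  rw [Finset.sum_congr rfl (fun k2 _ => Finset.sum_congr rfl (fun s _ => h2 k2 s))]
  have step2 : ∀ k2, (∑ s, if k2 = k' then x (Sum.inr (s, k2)) * HX s q else 0)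
      = if k2 = k' then (∑ s, x (Sum.inr (s, k2)) * HX s q) else 0 := by
    intro k2; split <;> simp
  rw [Finset.sum_congr rfl (fun k2 _ => step2 k2), Finset.sum_ite_eq', if_pos (Finset.mem_univ k')]

end B

lemma sum_link {l : ℕ} (g : Fin (l - 1) → F2) (k : Fin l) :
    (∑ k', if k.val = k'.val ∨ k.val = k'.val + 1 then g k' else 0)
    = (if h : k.val < l - 1 then g ⟨k.val, h⟩ else 0)
      + (if h : 0 < k.val then g ⟨k.val - 1, by have := k.isLt; omega⟩ else 0) := by
  have hsplit : ∀ k' : Fin (l - 1), (if k.val = k'.val ∨ k.val = k'.val + 1 then g k' else 0)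
      = (if k.val = k'.val then g k' else 0) + (if k.val = k'.val + 1 then g k' else 0) := by
    intro k'
    apply ite_or_split
    rintro ⟨h1, h2⟩; omega
  rw [Finset.sum_congr rfl (fun k' _ => hsplit k'), Finset.sum_add_distrib]
  congr 1
  · by_cases h : k.val < l - 1
    · rw [dif_pos h]
      have : ∀ k' : Fin (l - 1), (if k.val = k'.val then g k' else 0)
          = if k' = ⟨k.val, h⟩ then g k' else 0 := by
        intro k'
        congr 1
        simp only [Fin.ext_iff, eq_comm]
      rw [Finset.sum_congr rfl (fun k' _ => this k'), Finset.sum_ite_eq',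
        if_pos (Finset.mem_univ _)]
    · rw [dif_neg h]
      apply Finset.sum_eq_zero
      intro k' _
      rw [if_neg]
      have := k'.isLt; omega
  · by_cases h : 0 < k.val
    · rw [dif_pos h]
      have hlt : k.val - 1 < l - 1 := by have := k.isLt; omega
      have : ∀ k' : Fin (l - 1), (if k.val = k'.val + 1 then g k' else 0)
          = if k' = ⟨k.val - 1, hlt⟩ then g k' else 0 := by
        intro k'
        congr 1
        simp only [Fin.ext_iff, eq_iff_iff]
        omega
      rw [Finset.sum_congr rfl (fun k' _ => this k'), Finset.sum_ite_eq',
        if_pos (Finset.mem_univ _)]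
    · rw [dif_neg h]
      apply Finset.sum_eq_zero
      intro k' _
      rw [if_neg]
      omega

section C
variable {N nX nZ : ℕ} (HX : Matrix (Fin nX) (Fin N) F2) (HZ : Matrix (Fin nZ) (Fin N) F2)
  {l : ℕ} (κ : Fin nZ → Fin l)

lemma vecMul_thickHZ_inl (x : TZIdx N nZ l → F2) (q : Fin N) (k : Fin l) :
    (x ᵥ* thickHZ HX HZ l κ) (Sum.inl (q, k))
      = (∑ R, if k = κ R then x (Sum.inl R) * HZ R q else 0)
        + (∑ k', if k.val = k'.val ∨ k.val = k'.val + 1 then x (Sum.inr (q, k')) else 0) := by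
  simp only [Matrix.vecMul, dotProduct, thickHZ, Fintype.sum_sum_type, Fintype.sum_prod_type]
  congr 1
  · apply Finset.sum_congr rfl
    intro R _
    rw [mul_ite, mul_zero]
  · have h1 : ∀ p : Fin N, ∀ k' : Fin (l - 1),
        (x (Sum.inr (p, k')) * if q = p ∧ (k.val = k'.val ∨ k.val = k'.val + 1) then 1 else 0)
        = if p = q then (if k.val = k'.val ∨ k.val = k'.val + 1 then x (Sum.inr (p, k')) else 0)
          else 0 := by
      intro p k'
      by_cases hp : q = p <;> by_cases h2 : k.val = k'.val ∨ k.val = k'.val + 1 <;>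
        simp [hp, h2, eq_comm]
    rw [Finset.sum_congr rfl (fun p _ => Finset.sum_congr rfl (fun k' _ => h1 p k'))]
    have step : ∀ p, (∑ k' : Fin (l - 1), if p = q
          then (if k.val = k'.val ∨ k.val = k'.val + 1 then x (Sum.inr (p, k')) else 0) else 0)
        = if p = q then (∑ k' : Fin (l - 1),
            if k.val = k'.val ∨ k.val = k'.val + 1 then x (Sum.inr (p, k')) else 0) else 0 := by
      intro p; split <;> simp
    rw [Finset.sum_congr rfl (fun p _ => step p), Finset.sum_ite_eq', if_pos (Finset.mem_univ q)]

lemma vecMul_thickHZ_inr (x : TZIdx N nZ l → F2) (s : Fin nX) (k' : Fin (l - 1)) :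
    (x ᵥ* thickHZ HX HZ l κ) (Sum.inr (s, k'))
      = ∑ p, x (Sum.inr (p, k')) * HX s p := by
  simp only [Matrix.vecMul, dotProduct, thickHZ, Fintype.sum_sum_type, Fintype.sum_prod_type]
  rw [Finset.sum_congr rfl (fun R (_ : R ∈ Finset.univ) => mul_zero (x (Sum.inl R)))]
  rw [Finset.sum_const, smul_zero, zero_add]
  have h1 : ∀ p : Fin N, ∀ k2 : Fin (l - 1),
      (x (Sum.inr (p, k2)) * if k'.val = k2.val then HX s p else 0)
      = if k2 = k' then x (Sum.inr (p, k2)) * HX s p else 0 := by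
    intro p k2
    by_cases hk : k2 = k'
    · simp [hk]
    · rw [if_neg (fun hc => hk (Fin.ext hc.symm)), mul_zero, if_neg hk]
  rw [Finset.sum_congr rfl (fun p _ => Finset.sum_congr rfl (fun k2 _ => h1 p k2))]
  have step : ∀ p, (∑ k2, if k2 = k' then x (Sum.inr (p, k2)) * HX s p else 0)
      = if k' ∈ Finset.univ then x (Sum.inr (p, k')) * HX s p else 0 :=
    fun p => Finset.sum_ite_eq' Finset.univ k' _
  rw [Finset.sum_congr rfl (fun p _ => step p)]
  simp

end C

lemma wt_eq_sum {α : Type*} [Fintype α] (v : α → F2) :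
    wt v = ∑ j, if v j ≠ 0 then 1 else 0 := by
  rw [wt, Finset.card_filter]

lemma wt_sum_type {α β : Type*} [Fintype α] [Fintype β] (f : α ⊕ β → F2) :
    wt f = wt (fun a => f (Sum.inl a)) + wt (fun b => f (Sum.inr b)) := by
  simp only [wt_eq_sum, Fintype.sum_sum_type]

lemma wt_prod_layers {α β : Type*} [Fintype α] [Fintype β] (h : α × β → F2) :
    wt h = ∑ k : β, wt (fun q => h (q, k)) := by
  simp only [wt_eq_sum, Fintype.sum_prod_type]
  exact Finset.sum_comm

lemma wt_const_layer {α : Type*} [Fintype α] {l : ℕ} (v : α → F2) :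
    wt (fun p : α × Fin l => v p.1) = l * wt v := by
  rw [wt_prod_layers]
  simp [Finset.sum_const, mul_comm]

section D
variable {N nX nZ : ℕ} (HX : Matrix (Fin nX) (Fin N) F2) (HZ : Matrix (Fin nZ) (Fin N) F2)
  {l : ℕ} (κ : Fin nZ → Fin l)

/-- constancy of a vector satisfying the link conditions -/
lemma const_of_link (hl : 2 ≤ l) (d : Fin nX × Fin l → F2)
    (h : ∀ s (k' : Fin (l - 1)), d (s, e0 k') + d (s, e1 k') = 0) :
    ∀ s (k : Fin l), d (s, k) = d (s, ⟨0, by omega⟩) := by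
  intro s k
  obtain ⟨i, hi⟩ := k
  induction i with
  | zero => rfl
  | succ i ih =>
    have hi' : i < l - 1 := by omega
    have h1 := F2.eq_of_add_eq_zero (h s ⟨i, hi'⟩)
    have h2 : e0 (⟨i, hi'⟩ : Fin (l - 1)) = ⟨i, by omega⟩ := rfl
    have h3 : e1 (⟨i, hi'⟩ : Fin (l - 1)) = ⟨i + 1, hi⟩ := rfl
    rw [h2, h3] at h1
    rw [← h1, ih (by omega)]

lemma thickHX_leftker_finrank (hl : 2 ≤ l) :
    Module.finrank F2 (LinearMap.ker (vecMulLinear (thickHX HX l)))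
      = Module.finrank F2 (LinearMap.ker (vecMulLinear HX)) := by
  have hl0 : 0 < l := by omega
  refine (LinearEquiv.finrank_eq ?_).symm
  refine
    { toFun := fun c => ⟨fun p => c.1 p.1, ?m1⟩
      map_add' := fun a b => rfl
      map_smul' := fun m a => rfl
      invFun := fun d => ⟨fun s => d.1 (s, ⟨0, hl0⟩), ?m2⟩
      left_inv := fun c => rfl
      right_inv := fun d => ?m3 }
  case m1 =>
    rw [LinearMap.mem_ker, vecMulLinear_apply]
    funext j
    have hc : c.1 ᵥ* HX = 0 := by
      have := c.2; rwa [LinearMap.mem_ker, vecMulLinear_apply] at this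
    rcases j with ⟨q, k⟩ | ⟨s, k'⟩
    · rw [vecMul_thickHX_inl]
      show ((fun s => c.1 s) ᵥ* HX) q = 0
      rw [show (fun s => c.1 s) = c.1 from rfl, hc]
      rfl
    · rw [vecMul_thickHX_inr]
      exact F2.add_self _
  case m2 =>
    rw [LinearMap.mem_ker, vecMulLinear_apply]
    have hd : d.1 ᵥ* thickHX HX l = 0 := by
      have := d.2; rwa [LinearMap.mem_ker, vecMulLinear_apply] at this
    funext q
    have := congrFun hd (Sum.inl (q, ⟨0, hl0⟩))
    rw [vecMul_thickHX_inl] at this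
    exact this
  case m3 =>
    have hd : d.1 ᵥ* thickHX HX l = 0 := by
      have := d.2; rwa [LinearMap.mem_ker, vecMulLinear_apply] at this
    have hlink : ∀ s (k' : Fin (l - 1)), d.1 (s, e0 k') + d.1 (s, e1 k') = 0 := by
      intro s k'
      have := congrFun hd (Sum.inr (s, k'))
      rw [vecMul_thickHX_inr] at this
      exact this
    apply Subtype.ext
    funext p
    exact (const_of_link hl d.1 hlink p.1 p.2).symm

end D

lemma sum_link_k {l : ℕ} (g : Fin l → F2) (k' : Fin (l - 1)) :
    (∑ k, if k.val = k'.val ∨ k.val = k'.val + 1 then g k else 0) = g (e0 k') + g (e1 k') := by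
  have hc : ∀ k : Fin l, (if k.val = k'.val ∨ k.val = k'.val + 1 then g k else 0)
      = (if k = e0 k' ∨ k = e1 k' then g k else 0) := by
    intro k
    congr 1
    simp only [e0, e1, Fin.ext_iff, eq_iff_iff]
    try omega
  rw [Finset.sum_congr rfl (fun k _ => hc k)]
  exact sum_ite_or _ _ (e0_ne_e1 k') g

lemma vecMul_apply {m n : Type*} [Fintype m] (A : Matrix m n F2) (x : m → F2) (j : n) :
    (x ᵥ* A) j = ∑ i, x i * A i j := rfl

section E
variable {N nX nZ : ℕ} (HX : Matrix (Fin nX) (Fin N) F2) (HZ : Matrix (Fin nZ) (Fin N) F2)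
  {l : ℕ} (κ : Fin nZ → Fin l)

/-- the `HZ`-part of a left-kernel vector of `thickHZ` is in the left kernel of `HZ`. -/
lemma thickHZ_leftker_a (x : TZIdx N nZ l → F2) (hx : x ᵥ* thickHZ HX HZ l κ = 0) :
    (fun R => x (Sum.inl R)) ᵥ* HZ = 0 := by
  funext q
  have hk : ∀ k : Fin l,
      (∑ R, if k = κ R then x (Sum.inl R) * HZ R q else 0)
      + (∑ k', if k.val = k'.val ∨ k.val = k'.val + 1 then x (Sum.inr (q, k')) else 0) = 0 := by
    intro k
    have := congrFun hx (Sum.inl (q, k))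
    rwa [vecMul_thickHZ_inl] at this
  have hsum : ∑ k : Fin l, ((∑ R, if k = κ R then x (Sum.inl R) * HZ R q else 0)
      + (∑ k', if k.val = k'.val ∨ k.val = k'.val + 1 then x (Sum.inr (q, k')) else 0)) = 0 := by
    rw [Finset.sum_congr rfl (fun k _ => hk k)]; simp
  rw [Finset.sum_add_distrib] at hsum
  have h1 : ∑ k : Fin l, (∑ R, if k = κ R then x (Sum.inl R) * HZ R q else 0)
      = ∑ R, x (Sum.inl R) * HZ R q := by
    rw [Finset.sum_comm]
    apply Finset.sum_congr rfl
    intro R _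
    rw [Finset.sum_ite_eq' Finset.univ (κ R), if_pos (Finset.mem_univ _)]
  have h2 : ∑ k : Fin l, (∑ k', if k.val = k'.val ∨ k.val = k'.val + 1
        then x (Sum.inr (q, k')) else 0) = 0 := by
    rw [Finset.sum_comm]
    apply Finset.sum_eq_zero
    intro k' _
    rw [sum_link_k]
    exact F2.add_self _
  rw [h1, h2, add_zero] at hsum
  exact hsum

/-- a left-kernel vector of `thickHZ` with vanishing `HZ`-part is zero. -/
lemma thickHZ_leftker_b_zero (hl : 2 ≤ l) (x : TZIdx N nZ l → F2)
    (hx : x ᵥ* thickHZ HX HZ l κ = 0) (ha : ∀ R, x (Sum.inl R) = 0) : x = 0 := by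
  have hT2 : ∀ (q : Fin N) (k : Fin l),
      (if h : k.val < l - 1 then x (Sum.inr (q, ⟨k.val, h⟩)) else 0)
      + (if h : 0 < k.val then x (Sum.inr (q, ⟨k.val - 1, by have := k.isLt; omega⟩)) else 0)
        = 0 := by
    intro q k
    have := congrFun hx (Sum.inl (q, k))
    rw [vecMul_thickHZ_inl, sum_link] at this
    have hz : (∑ R, if k = κ R then x (Sum.inl R) * HZ R q else 0) = 0 := by
      apply Finset.sum_eq_zero
      intro R _
      rw [ha R, zero_mul, ite_self]
    rwa [hz, zero_add] at this
  have hb : ∀ (i : ℕ) (hi : i < l - 1) (q : Fin N), x (Sum.inr (q, ⟨i, hi⟩)) = 0 := by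
    intro i
    induction i with
    | zero =>
      intro hi q
      have := hT2 q ⟨0, by omega⟩
      rw [dif_pos (show (0:ℕ) < l - 1 by omega), dif_neg (Nat.lt_irrefl 0), add_zero] at this
      exact this
    | succ i ih =>
      intro hi q
      have := hT2 q ⟨i + 1, by omega⟩
      rw [dif_pos (show i + 1 < l - 1 from hi), dif_pos (Nat.succ_pos i)] at this
      have hprev : x (Sum.inr (q, (⟨i + 1 - 1, by omega⟩ : Fin (l - 1)))) = 0 := ih (by omega) q
      rw [hprev, add_zero] at this
      exact this
  funext r
  rcases r with R | ⟨q, k'⟩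
  · exact ha R
  · obtain ⟨i, hi⟩ := k'
    exact hb i hi q

/-- construction of a left-kernel vector of `thickHZ` from one of `HZ`. -/
lemma thickHZ_leftker_construct (hCSS : HX * HZ.transpose = 0) (a : Fin nZ → F2)
    (ha : a ᵥ* HZ = 0) :
    (Sum.elim a (fun p : Fin N × Fin (l - 1) =>
        ∑ R, if (κ R).val ≤ p.2.val then a R * HZ R p.1 else 0)) ᵥ* thickHZ HX HZ l κ = 0 := by
  set b : Fin N × Fin (l - 1) → F2 := fun p =>
    ∑ R, if (κ R).val ≤ p.2.val then a R * HZ R p.1 else 0 with hbdef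
  funext j
  show (Sum.elim a b ᵥ* thickHZ HX HZ l κ) j = 0
  rcases j with ⟨q, k⟩ | ⟨s, k'⟩
  · rw [vecMul_thickHZ_inl, sum_link]
    simp only [Sum.elim_inl, Sum.elim_inr]
    have hfull : ∑ R, a R * HZ R q = 0 := by
      have := congrFun ha q
      rwa [_root_.vecMul_apply] at this
    have hStop : ∀ m : ℕ, l - 1 ≤ m → (∑ R, if (κ R).val ≤ m then a R * HZ R q else 0) = 0 := by
      intro m hm
      rw [Finset.sum_congr rfl (fun R _ => if_pos (by have := (κ R).isLt; omega))]
      exact hfull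
    have h1 : (if h : k.val < l - 1 then b (q, ⟨k.val, h⟩) else 0)
        = ∑ R, if (κ R).val ≤ k.val then a R * HZ R q else 0 := by
      by_cases h : k.val < l - 1
      · rw [dif_pos h]
      · rw [dif_neg h, hStop k.val (by omega)]
    rw [h1]
    by_cases hk0 : 0 < k.val
    · rw [dif_pos hk0]
      show (∑ R, if k = κ R then a R * HZ R q else 0)
        + ((∑ R, if (κ R).val ≤ k.val then a R * HZ R q else 0)
          + (∑ R, if (κ R).val ≤ k.val - 1 then a R * HZ R q else 0)) = 0
      rw [← Finset.sum_add_distrib, ← Finset.sum_add_distrib]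
      apply Finset.sum_eq_zero
      intro R _
      have hval : (k = κ R) ↔ ((κ R).val = k.val) := by
        rw [Fin.ext_iff]; exact eq_comm
      by_cases h1 : k = κ R
      · have hv := hval.mp h1
        rw [if_pos h1, if_pos (by omega), if_neg (by omega), add_zero]
        exact F2.add_self _
      · have hv : (κ R).val ≠ k.val := fun hc => h1 (hval.mpr hc)
        by_cases h2 : (κ R).val ≤ k.val - 1
        · rw [if_neg h1, if_pos (by omega), if_pos h2, zero_add]
          exact F2.add_self _
        · rw [if_neg h1, if_neg (by omega), if_neg h2, add_zero, add_zero]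
    · rw [dif_neg hk0, add_zero]
      have hk0' : k.val = 0 := by omega
      show (∑ R, if k = κ R then a R * HZ R q else 0)
        + (∑ R, if (κ R).val ≤ k.val then a R * HZ R q else 0) = 0
      rw [← Finset.sum_add_distrib]
      apply Finset.sum_eq_zero
      intro R _
      have hval : (k = κ R) ↔ ((κ R).val = k.val) := by
        rw [Fin.ext_iff]; exact eq_comm
      by_cases h1 : k = κ R
      · rw [if_pos h1, if_pos (by have := hval.mp h1; omega)]
        exact F2.add_self _
      · rw [if_neg h1, if_neg (by have : (κ R).val ≠ k.val := fun hc => h1 (hval.mpr hc); omega),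
          add_zero]
  · rw [vecMul_thickHZ_inr]
    simp only [Sum.elim_inr]
    have hpoint : ∀ p : Fin N,
        b (p, k') * HX s p
        = ∑ R, if (κ R).val ≤ k'.val then a R * (HZ R p * HX s p) else 0 := by
      intro p
      rw [hbdef, Finset.sum_mul]
      apply Finset.sum_congr rfl
      intro R _
      by_cases h : (κ R).val ≤ k'.val
      · rw [if_pos h, if_pos h, mul_assoc]
      · rw [if_neg h, if_neg h, zero_mul]
    rw [Finset.sum_congr rfl (fun p _ => hpoint p), Finset.sum_comm]
    apply Finset.sum_eq_zero
    intro R _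
    have hpull : (∑ p, if (κ R).val ≤ k'.val then a R * (HZ R p * HX s p) else 0)
        = if (κ R).val ≤ k'.val then ∑ p, a R * (HZ R p * HX s p) else 0 := by
      split <;> simp
    rw [hpull]
    have hz : ∑ p, a R * (HZ R p * HX s p) = 0 := by
      rw [← Finset.mul_sum]
      have : ∑ p, HZ R p * HX s p = 0 := by
        have hc := congrFun (congrFun hCSS s) R
        rw [Matrix.mul_apply, Matrix.zero_apply] at hc
        rw [← hc]
        apply Finset.sum_congr rfl
        intro p _
        rw [Matrix.transpose_apply, mul_comm]
      rw [this, mul_zero]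
    rw [hz, ite_self]

lemma thickHZ_leftker_finrank (hl : 2 ≤ l) (hCSS : HX * HZ.transpose = 0) :
    Module.finrank F2 (LinearMap.ker (vecMulLinear (thickHZ HX HZ l κ)))
      = Module.finrank F2 (LinearMap.ker (vecMulLinear HZ)) := by
  refine LinearEquiv.finrank_eq ?_
  refine
    { toFun := fun x => ⟨fun R => x.1 (Sum.inl R), ?m1⟩
      map_add' := fun a b => rfl
      map_smul' := fun m a => rfl
      invFun := fun a => ⟨Sum.elim a.1 (fun p : Fin N × Fin (l - 1) =>
        ∑ R, if (κ R).val ≤ p.2.val then a.1 R * HZ R p.1 else 0), ?m2⟩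
      left_inv := fun x => ?m3
      right_inv := fun a => rfl }
  case m1 =>
    rw [LinearMap.mem_ker, vecMulLinear_apply]
    exact thickHZ_leftker_a HX HZ κ x.1 (by
      have := x.2; rwa [LinearMap.mem_ker, vecMulLinear_apply] at this)
  case m2 =>
    rw [LinearMap.mem_ker, vecMulLinear_apply]
    exact thickHZ_leftker_construct HX HZ κ hCSS a.1 (by
      have := a.2; rwa [LinearMap.mem_ker, vecMulLinear_apply] at this)
  case m3 =>
    apply Subtype.ext
    have hx : x.1 ᵥ* thickHZ HX HZ l κ = 0 := by
      have := x.2; rwa [LinearMap.mem_ker, vecMulLinear_apply] at this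
    have ha : (fun R => x.1 (Sum.inl R)) ᵥ* HZ = 0 := thickHZ_leftker_a HX HZ κ x.1 hx
    set y : TZIdx N nZ l → F2 := Sum.elim (fun R => x.1 (Sum.inl R))
      (fun p : Fin N × Fin (l - 1) =>
        ∑ R, if (κ R).val ≤ p.2.val then x.1 (Sum.inl R) * HZ R p.1 else 0) with hydef
    have hy : y ᵥ* thickHZ HX HZ l κ = 0 :=
      thickHZ_leftker_construct HX HZ κ hCSS _ ha
    have hdiff : (y - x.1) ᵥ* thickHZ HX HZ l κ = 0 := by
      rw [Matrix.sub_vecMul, hx, hy, sub_zero]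
    have hzero : y - x.1 = 0 := by
      apply thickHZ_leftker_b_zero HX HZ κ hl _ hdiff
      intro R
      show y (Sum.inl R) - x.1 (Sum.inl R) = 0
      rw [hydef]
      simp
    have := sub_eq_zero.mp hzero
    exact this

end E

lemma wt_zero_fn {α : Type*} [Fintype α] : wt (fun _ : α => (0 : F2)) = 0 := by
  simp [wt]

lemma F2.three_add {a b c : F2} (h : a + b + c = 0) : b = a + c := by
  revert h; revert a b c; decide

section G
variable {N nX nZ : ℕ} (HX : Matrix (Fin nX) (Fin N) F2) (HZ : Matrix (Fin nZ) (Fin N) F2)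
  {l : ℕ} (κ : Fin nZ → Fin l)

/-- nonemptiness of the distance set for the base code -/
lemma SC_nonempty (hK : HX.rank + HZ.rank < N) :
    {k | ∃ v : Fin N → F2, HZ.mulVec v = 0 ∧
      v ∉ Submodule.span F2 (Set.range HX) ∧ wt v = k}.Nonempty := by
  have hex : ∃ v : Fin N → F2, HZ.mulVec v = 0 ∧ v ∉ Submodule.span F2 (Set.range HX) := by
    by_contra hcon
    push_neg at hcon
    have hle : LinearMap.ker HZ.mulVecLin ≤ Submodule.span F2 (Set.range HX) := by
      intro v hv
      rw [LinearMap.mem_ker, Matrix.mulVecLin_apply] at hv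
      exact hcon v hv
    have h1 : Module.finrank F2 (LinearMap.ker HZ.mulVecLin)
        ≤ Module.finrank F2 (Submodule.span F2 (Set.range HX)) :=
      Submodule.finrank_mono hle
    have h2 : HZ.rank + Module.finrank F2 (LinearMap.ker HZ.mulVecLin) = N := by
      have := LinearMap.finrank_range_add_finrank_ker (HZ.mulVecLin)
      rw [Module.finrank_pi] at this
      simpa [Matrix.rank] using this
    have h3 : HX.rank = Module.finrank F2 (Submodule.span F2 (Set.range HX)) :=
      Matrix.rank_eq_finrank_span_row HX
    omega
  obtain ⟨v, h1, h2⟩ := hex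
  exact ⟨wt v, v, h1, h2, rfl⟩

/-- the thickened vector of a logical `v` is a codeword of weight `l * wt v`
avoiding the row span. -/
lemma thick_upper (hl : 2 ≤ l) (v : Fin N → F2) (hv1 : HZ.mulVec v = 0)
    (hv2 : v ∉ Submodule.span F2 (Set.range HX)) :
    ∃ w : TQubit N nX l → F2, (thickHZ HX HZ l κ).mulVec w = 0 ∧
      w ∉ Submodule.span F2 (Set.range (thickHX HX l)) ∧ wt w = l * wt v := by
  refine ⟨Sum.elim (fun p : Fin N × Fin l => v p.1) (fun _ => 0), ?_, ?_, ?_⟩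
  · funext r
    rcases r with R | ⟨q, k'⟩
    · rw [mulVec_thickHZ_inl]
      show (HZ *ᵥ (fun q => v q)) R = 0
      exact congrFun hv1 R
    · rw [mulVec_thickHZ_inr]
      show v q + v q + ((fun _ => (0:F2)) ᵥ* HX) q = 0
      rw [show (fun _ => (0:F2)) = (0 : Fin nX → F2) from rfl, Matrix.zero_vecMul,
        F2.add_self]
      rfl
  · intro hmem
    rw [mem_span_rows_iff] at hmem
    obtain ⟨d, hd⟩ := hmem
    have hlink : ∀ s (k' : Fin (l - 1)), d (s, e0 k') + d (s, e1 k') = 0 := by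
      intro s k'
      have := congrFun hd (Sum.inr (s, k'))
      rwa [vecMul_thickHX_inr] at this
    apply hv2
    rw [mem_span_rows_iff]
    refine ⟨fun s => d (s, ⟨0, by omega⟩), ?_⟩
    funext q
    have := congrFun hd (Sum.inl (q, ⟨0, by omega⟩))
    rw [vecMul_thickHX_inl] at this
    exact this
  · rw [wt_sum_type]
    show wt (fun p : Fin N × Fin l => v p.1) + wt (fun _ : Fin nX × Fin (l-1) => (0:F2)) = _
    rw [wt_const_layer, wt_zero_fn, add_zero]

end G

section H
variable {N nX nZ : ℕ} (HX : Matrix (Fin nX) (Fin N) F2) (HZ : Matrix (Fin nZ) (Fin N) F2)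
  {l : ℕ} (κ : Fin nZ → Fin l)

/-- layer `k` of a thickened vector -/
def layerOf {N nX l : ℕ} (w : TQubit N nX l → F2) (k : Fin l) : Fin N → F2 :=
  fun q => w (Sum.inl (q, k))

/-- link part `k'` of a thickened vector -/
def linkOf {N nX l : ℕ} (w : TQubit N nX l → F2) (k' : Fin (l - 1)) : Fin nX → F2 :=
  fun s => w (Sum.inr (s, k'))

set_option maxHeartbeats 2000000 in
lemma thick_lower (hl : 2 ≤ l) (hCSS : HX * HZ.transpose = 0) (w : TQubit N nX l → F2)
    (hw1 : (thickHZ HX HZ l κ).mulVec w = 0)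
    (hw2 : w ∉ Submodule.span F2 (Set.range (thickHX HX l))) :
    l * distX HX HZ ≤ wt w := by
  have hl0 : 0 < l := by omega
  have hstep : ∀ k' : Fin (l - 1),
      layerOf w (e1 k') = layerOf w (e0 k') + (linkOf w k') ᵥ* HX := by
    intro k'
    funext q
    have := congrFun hw1 (Sum.inr (q, k'))
    rw [mulVec_thickHZ_inr] at this
    exact F2.three_add this
  have hdiff : ∀ k : Fin l, ∃ c, layerOf w k = layerOf w ⟨0, hl0⟩ + c ᵥ* HX := by
    intro k
    obtain ⟨i, hi⟩ := k
    induction i with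
    | zero => exact ⟨0, by rw [Matrix.zero_vecMul, add_zero]⟩
    | succ i ih =>
      obtain ⟨c, hc⟩ := ih (by omega)
      refine ⟨c + linkOf w ⟨i, by omega⟩, ?_⟩
      have h1 : layerOf w ⟨i + 1, hi⟩
          = layerOf w ⟨i, by omega⟩ + (linkOf w ⟨i, by omega⟩) ᵥ* HX :=
        hstep ⟨i, by omega⟩
      rw [h1, hc, Matrix.add_vecMul, add_assoc]
  have hCSS' : HZ * HXᵀ = 0 := by
    have := congrArg Matrix.transpose hCSS
    rwa [Matrix.transpose_mul, Matrix.transpose_transpose, Matrix.transpose_zero] at this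
  have hconst : ∀ k, HZ *ᵥ layerOf w k = HZ *ᵥ layerOf w ⟨0, hl0⟩ := by
    intro k
    obtain ⟨c, hc⟩ := hdiff k
    rw [hc, Matrix.mulVec_add, Matrix.mulVec_vecMul, hCSS', Matrix.zero_mulVec, add_zero]
  have hker : ∀ k, HZ *ᵥ layerOf w k = 0 := by
    have hrow : ∀ R, (HZ *ᵥ layerOf w (κ R)) R = 0 := by
      intro R
      have := congrFun hw1 (Sum.inl R)
      rwa [mulVec_thickHZ_inl] at this
    intro k
    funext R
    have h2 : (HZ *ᵥ layerOf w k) R = (HZ *ᵥ layerOf w (κ R)) R := by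
      rw [hconst k, hconst (κ R)]
    rw [h2]
    show _ = (0 : F2)
    rw [hrow R]
  have hrecon : layerOf w ⟨0, hl0⟩ ∈ Submodule.span F2 (Set.range HX)
      → w ∈ Submodule.span F2 (Set.range (thickHX HX l)) := by
    intro h0
    rw [mem_span_rows_iff] at h0 ⊢
    obtain ⟨c0, hc0⟩ := h0
    refine ⟨fun p => c0 p.1 + ∑ k', if k'.val < p.2.val then linkOf w k' p.1 else 0, ?_⟩
    set d : Fin nX × Fin l → F2 :=
      fun p => c0 p.1 + ∑ k', if k'.val < p.2.val then linkOf w k' p.1 else 0 with hddef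
    have hdsucc : ∀ (s : Fin nX) (i : ℕ) (hi : i + 1 < l),
        d (s, ⟨i + 1, hi⟩) = d (s, ⟨i, by omega⟩) + linkOf w ⟨i, by omega⟩ s := by
      intro s i hi
      show c0 s + (∑ k', if k'.val < i + 1 then linkOf w k' s else 0)
        = (c0 s + ∑ k', if k'.val < i then linkOf w k' s else 0) + linkOf w ⟨i, by omega⟩ s
      have hsplit : ∀ k' : Fin (l - 1), (if k'.val < i + 1 then linkOf w k' s else 0)
          = (if k'.val < i then linkOf w k' s else 0)
            + (if k' = ⟨i, by omega⟩ then linkOf w k' s else 0) := by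
        intro k'
        by_cases h1 : k'.val < i
        · rw [if_pos (by omega), if_pos h1, if_neg (fun hc => by
            rw [hc] at h1; exact Nat.lt_irrefl i h1), add_zero]
        · by_cases h2 : k'.val = i
          · rw [if_pos (by omega), if_neg (by omega), if_pos (Fin.ext h2), zero_add]
          · rw [if_neg (by omega), if_neg (by omega), if_neg (fun hc => h2 (by
              rw [hc])), add_zero]
      rw [Finset.sum_congr rfl (fun k' _ => hsplit k'), Finset.sum_add_distrib,
        Finset.sum_ite_eq' Finset.univ (⟨i, by omega⟩ : Fin (l - 1))
          (fun k' => linkOf w k' s), if_pos (Finset.mem_univ _), ← add_assoc]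
    have hlayer : ∀ (i : ℕ) (hi : i < l),
        (fun s => d (s, ⟨i, hi⟩)) ᵥ* HX = layerOf w ⟨i, hi⟩ := by
      intro i
      induction i with
      | zero =>
        intro hi
        have hz : (fun s => d (s, ⟨0, hi⟩)) = c0 := by
          funext s
          show c0 s + _ = c0 s
          rw [Finset.sum_eq_zero (fun k' _ => if_neg (Nat.not_lt_zero _)), add_zero]
        rw [hz, hc0]
      | succ i ih =>
        intro hi
        have h1 : (fun s => d (s, ⟨i + 1, hi⟩))
            = (fun s => d (s, ⟨i, by omega⟩)) + linkOf w ⟨i, by omega⟩ := by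
          funext s
          exact hdsucc s i hi
        rw [h1, Matrix.add_vecMul, ih (by omega)]
        exact (hstep ⟨i, by omega⟩).symm
    funext j
    rcases j with ⟨q, k⟩ | ⟨s, k'⟩
    · rw [vecMul_thickHX_inl]
      obtain ⟨i, hi⟩ := k
      rw [hlayer i hi]
      rfl
    · rw [vecMul_thickHX_inr]
      obtain ⟨i, hi⟩ := k'
      have h2 : d (s, e1 ⟨i, hi⟩) = d (s, e0 ⟨i, hi⟩) + linkOf w ⟨i, hi⟩ s :=
        hdsucc s i (by have := hi; omega)
      rw [h2, ← add_assoc, F2.add_self, zero_add]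
      rfl
  have hnot0 : layerOf w ⟨0, hl0⟩ ∉ Submodule.span F2 (Set.range HX) :=
    fun h => hw2 (hrecon h)
  have hnot : ∀ k, layerOf w k ∉ Submodule.span F2 (Set.range HX) := by
    intro k hk
    apply hnot0
    obtain ⟨c, hc⟩ := hdiff k
    have h3 : layerOf w ⟨0, hl0⟩ = layerOf w k + c ᵥ* HX := by
      rw [hc]
      funext q
      show layerOf w ⟨0, hl0⟩ q
        = (layerOf w ⟨0, hl0⟩ q + (c ᵥ* HX) q) + (c ᵥ* HX) q
      rw [add_assoc, F2.add_self, add_zero]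
    rw [h3]
    exact Submodule.add_mem _ hk ((mem_span_rows_iff HX _).mpr ⟨c, rfl⟩)
  have hbound : ∀ k, distX HX HZ ≤ wt (layerOf w k) :=
    fun k => Nat.sInf_le ⟨layerOf w k, hker k, hnot k, rfl⟩
  calc l * distX HX HZ = ∑ _k : Fin l, distX HX HZ := by
        rw [Finset.sum_const, Finset.card_univ, Fintype.card_fin, smul_eq_mul]
    _ ≤ ∑ k : Fin l, wt (layerOf w k) := Finset.sum_le_sum (fun k _ => hbound k)
    _ = ∑ k : Fin l, wt (fun q => w (Sum.inl (q, k))) := rfl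
    _ = wt (fun a : Fin N × Fin l => w (Sum.inl a)) :=
        (wt_prod_layers (fun a : Fin N × Fin l => w (Sum.inl a))).symm
    _ ≤ wt (fun a : Fin N × Fin l => w (Sum.inl a))
        + wt (fun b : Fin nX × Fin (l - 1) => w (Sum.inr b)) := Nat.le_add_right _ _
    _ = wt w := (wt_sum_type w).symm

end H

variable {N nX nZ : ℕ}

/-- For a CSS code with `K ≥ 1` and its thickened code with parameter
`l ≥ 2` and any choice function `κ`: `K̃ = K ≥ 1` and `d̃_X = l·d_X` exactly. -/
theorem stmt8 (HX : Matrix (Fin nX) (Fin N) (ZMod 2)) (HZ : Matrix (Fin nZ) (Fin N) (ZMod 2))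
    (hCSS : HX * HZ.transpose = 0) (l : ℕ) (hl : 2 ≤ l) (κ : Fin nZ → Fin l)
    (hK : 1 ≤ N - HX.rank - HZ.rank) :
    (Fintype.card (TQubit N nX l) - (thickHX HX l).rank - (thickHZ HX HZ l κ).rank
        = N - HX.rank - HZ.rank) ∧
    distX (thickHX HX l) (thickHZ HX HZ l κ) = l * distX HX HZ := by
  have e2 := rank_add_leftker HX
  have e4 := rank_add_leftker HZ
  have e1 := rank_add_leftker (thickHX HX l)
  have e3 := rank_add_leftker (thickHZ HX HZ l κ)
  rw [thickHX_leftker_finrank HX hl] at e1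
  rw [thickHZ_leftker_finrank HX HZ κ hl hCSS] at e3
  simp only [Fintype.card_prod, Fintype.card_sum, Fintype.card_fin] at e1 e2 e3 e4
  have hcard : Fintype.card (TQubit N nX l) = N * l + nX * (l - 1) := by
    simp [TQubit]
  have hx1 : nX * l = nX * (l - 1) + nX := by
    have h : l - 1 + 1 = l := by omega
    calc nX * l = nX * ((l - 1) + 1) := by rw [h]
    _ = nX * (l - 1) + nX := by ring
  have hx2 : N * l = N * (l - 1) + N := by
    have h : l - 1 + 1 = l := by omega
    calc N * l = N * ((l - 1) + 1) := by rw [h]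
    _ = N * (l - 1) + N := by ring
  have hKlt : HX.rank + HZ.rank < N := by omega
  constructor
  · omega
  · -- distance part
    obtain ⟨m, hm⟩ := SC_nonempty HX HZ hKlt
    have hdmem : distX HX HZ ∈ {k | ∃ v : Fin N → F2, HZ.mulVec v = 0 ∧
        v ∉ Submodule.span F2 (Set.range HX) ∧ wt v = k} :=
      Nat.sInf_mem ⟨m, hm⟩
    obtain ⟨v, hv1, hv2, hv3⟩ := hdmem
    obtain ⟨w, hw1, hw2, hw3⟩ := thick_upper HX HZ κ hl v hv1 hv2
    apply le_antisymm
    · apply Nat.sInf_le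
      exact ⟨w, hw1, hw2, by rw [hw3, hv3]⟩
    · have hne : {k | ∃ w' : TQubit N nX l → F2, (thickHZ HX HZ l κ).mulVec w' = 0 ∧
          w' ∉ Submodule.span F2 (Set.range (thickHX HX l)) ∧ wt w' = k}.Nonempty :=
        ⟨wt w, w, hw1, hw2, rfl⟩
      obtain ⟨w', hw1', hw2', hw3'⟩ := Nat.sInf_mem hne
      calc l * distX HX HZ ≤ wt w' := thick_lower HX HZ κ hl hCSS w' hw1' hw2'
      _ = distX (thickHX HX l) (thickHZ HX HZ l κ) := hw3'
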